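/- Let M₁ be an n×m matrix with ‖M₁‖ ≤ K and M₂ an invertible n×n matrix, and let M = [[I_m, 0], [M₁, M₂]]. Then the operator norm of M⁻¹ satisfies ‖M⁻¹‖ ≤ (m + (1 + mK²)·‖M₂⁻¹‖_F²)^{1/2} ≤ (m + (1 + mK²)·n·‖M₂⁻¹‖²)^{1/2}. -/

import Mathlib

/-- The operator norm of a real matrix, induced by the Euclidean norms. -/
noncomputable def matOpNorm {m n : Type*} [Fintype m] [Fintype n] [DecidableEq n]
    (A : Matrix m n ℝ) : ℝ :=
  ‖LinearMap.toContinuousLinearMap (Matrix.toEuclideanLin (𝕜 := ℝ) A)‖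

/-- The Frobenius norm of a real matrix. -/
noncomputable def matFrobNorm {m n : Type*} [Fintype m] [Fintype n]
    (A : Matrix m n ℝ) : ℝ :=
  Real.sqrt (∑ i, ∑ j, (A i j) ^ 2)

noncomputable def frobSq {m n : Type*} [Fintype m] [Fintype n] (A : Matrix m n ℝ) : ℝ :=
  ∑ i, ∑ j, (A i j) ^ 2

lemma frobSq_nonneg {m n : Type*} [Fintype m] [Fintype n] (A : Matrix m n ℝ) :
    0 ≤ frobSq A :=
  Finset.sum_nonneg fun _ _ => Finset.sum_nonneg fun _ _ => sq_nonneg _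

lemma matFrobNorm_eq {m n : Type*} [Fintype m] [Fintype n] (A : Matrix m n ℝ) :
    matFrobNorm A = Real.sqrt (frobSq A) := rfl

lemma matFrobNorm_sq {m n : Type*} [Fintype m] [Fintype n] (A : Matrix m n ℝ) :
    matFrobNorm A ^ 2 = frobSq A := Real.sq_sqrt (frobSq_nonneg A)

lemma euclid_sq {k : Type*} [Fintype k] (v : k → ℝ) :
    ‖((WithLp.equiv 2 (k → ℝ)).symm v : EuclideanSpace ℝ k)‖ ^ 2 = ∑ i, v i ^ 2 := by
  rw [EuclideanSpace.norm_eq, Real.sq_sqrt (by positivity)]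
  simp [WithLp.equiv_symm_apply, PiLp.toLp_apply, Real.norm_eq_abs, sq_abs]

lemma sum_sq_mulVec_le {a b : Type*} [Fintype a] [Fintype b] [DecidableEq b]
    (A : Matrix a b ℝ) (x : b → ℝ) :
    ∑ i, (A.mulVec x i) ^ 2 ≤ matOpNorm A ^ 2 * ∑ j, (x j) ^ 2 := by
  have h := ContinuousLinearMap.le_opNorm
    (LinearMap.toContinuousLinearMap (Matrix.toEuclideanLin (𝕜 := ℝ) A))
    ((WithLp.equiv 2 (b → ℝ)).symm x)
  rw [LinearMap.coe_toContinuousLinearMap', WithLp.equiv_symm_apply, Matrix.toEuclideanLin_apply_piLp_toLp] at h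
  have h2 := pow_le_pow_left₀ (norm_nonneg _) h 2
  calc ∑ i, (A.mulVec x i) ^ 2
      = ‖((WithLp.equiv 2 (a → ℝ)).symm (A.mulVec x) : EuclideanSpace ℝ a)‖ ^ 2 :=
        (euclid_sq _).symm
    _ ≤ (matOpNorm A * ‖((WithLp.equiv 2 (b → ℝ)).symm x : EuclideanSpace ℝ b)‖) ^ 2 :=
        h2
    _ = matOpNorm A ^ 2 * ∑ j, (x j) ^ 2 := by rw [mul_pow, euclid_sq]

lemma matOpNorm_nonneg {a b : Type*} [Fintype a] [Fintype b] [DecidableEq b]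
    (A : Matrix a b ℝ) : 0 ≤ matOpNorm A :=
  norm_nonneg _

lemma matOpNorm_le_matFrobNorm {a b : Type*} [Fintype a] [Fintype b] [DecidableEq b]
    (A : Matrix a b ℝ) :
    matOpNorm A ≤ matFrobNorm A := by
  apply ContinuousLinearMap.opNorm_le_bound _ (Real.sqrt_nonneg _)
  intro x
  set v : b → ℝ := WithLp.equiv 2 (b → ℝ) x with hv
  have hx : x = (WithLp.equiv 2 (b → ℝ)).symm v := rfl
  have hLx : (LinearMap.toContinuousLinearMap (Matrix.toEuclideanLin (𝕜 := ℝ) A)) x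
      = (WithLp.equiv 2 (a → ℝ)).symm (A.mulVec v) := rfl
  have hsq : ‖(LinearMap.toContinuousLinearMap (Matrix.toEuclideanLin (𝕜 := ℝ) A)) x‖ ^ 2
      ≤ (matFrobNorm A * ‖x‖) ^ 2 := by
    rw [hLx, euclid_sq]
    have hCS : ∀ i : a, (A.mulVec v i) ^ 2 ≤ (∑ j, (A i j) ^ 2) * ∑ j, (v j) ^ 2 := by
      intro i
      have := Finset.sum_mul_sq_le_sq_mul_sq Finset.univ (fun j => A i j) v
      simpa [Matrix.mulVec, dotProduct] using this
    calc ∑ i, (A.mulVec v i) ^ 2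
        ≤ ∑ i, (∑ j, (A i j) ^ 2) * ∑ j, (v j) ^ 2 := Finset.sum_le_sum fun i _ => hCS i
      _ = frobSq A * ∑ j, (v j) ^ 2 := by rw [frobSq, Finset.sum_mul]
      _ = (matFrobNorm A * ‖x‖) ^ 2 := by
          rw [mul_pow, matFrobNorm_sq, hx, euclid_sq]
  calc ‖(LinearMap.toContinuousLinearMap (Matrix.toEuclideanLin (𝕜 := ℝ) A)) x‖
      = Real.sqrt (‖(LinearMap.toContinuousLinearMap (Matrix.toEuclideanLin (𝕜 := ℝ) A)) x‖ ^ 2) :=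
        (Real.sqrt_sq (norm_nonneg _)).symm
    _ ≤ Real.sqrt ((matFrobNorm A * ‖x‖) ^ 2) := Real.sqrt_le_sqrt hsq
    _ = matFrobNorm A * ‖x‖ :=
        Real.sqrt_sq (mul_nonneg (Real.sqrt_nonneg _) (norm_nonneg _))

lemma col_sq_sum_le {a b : Type*} [Fintype a] [Fintype b] [DecidableEq b]
    (A : Matrix a b ℝ) (j : b) :
    ∑ i, (A i j) ^ 2 ≤ matOpNorm A ^ 2 := by
  have h := sum_sq_mulVec_le A (Pi.single j (1:ℝ))
  have h1 : ∑ k : b, (Pi.single (M := fun _ : b => ℝ) j 1 k) ^ 2 = 1 := by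
    simp [Pi.single_apply]
  rw [h1, mul_one] at h
  simpa [Matrix.mulVec_single] using h

lemma frobSq_le_card_mul {a b : Type*} [Fintype a] [Fintype b] [DecidableEq b]
    (A : Matrix a b ℝ) :
    frobSq A ≤ Fintype.card b * matOpNorm A ^ 2 := by
  rw [frobSq, Finset.sum_comm]
  calc ∑ j : b, ∑ i, (A i j) ^ 2 ≤ ∑ _j : b, matOpNorm A ^ 2 :=
        Finset.sum_le_sum fun j _ => col_sq_sum_le A j
    _ = Fintype.card b * matOpNorm A ^ 2 := by
        simp [Finset.sum_const, Finset.card_univ, nsmul_eq_mul]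

lemma frobSq_mul_le {a b c : Type*} [Fintype a] [Fintype b] [Fintype c] [DecidableEq b]
    (B : Matrix a b ℝ) (A : Matrix b c ℝ) :
    frobSq (B * A) ≤ matOpNorm B ^ 2 * frobSq A := by
  have key : ∀ j : c, ∑ i, ((B * A) i j) ^ 2 ≤ matOpNorm B ^ 2 * ∑ k, (A k j) ^ 2 := by
    intro j
    have h := sum_sq_mulVec_le B (fun k => A k j)
    have he : ∀ i, (B * A) i j = B.mulVec (fun k => A k j) i := by
      intro i; simp [Matrix.mul_apply, Matrix.mulVec, dotProduct]
    simpa [he] using h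
  calc frobSq (B * A) = ∑ j, ∑ i, ((B * A) i j) ^ 2 := Finset.sum_comm
    _ ≤ ∑ j, matOpNorm B ^ 2 * ∑ k, (A k j) ^ 2 := Finset.sum_le_sum fun j _ => key j
    _ = matOpNorm B ^ 2 * ∑ j, ∑ k, (A k j) ^ 2 := (Finset.mul_sum _ _ _).symm
    _ = matOpNorm B ^ 2 * frobSq A := by rw [frobSq, Finset.sum_comm]

lemma frobSq_fromBlocks {a b c d : ℕ} (A : Matrix (Fin a) (Fin b) ℝ)
    (B : Matrix (Fin a) (Fin d) ℝ) (C : Matrix (Fin c) (Fin b) ℝ)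
    (D : Matrix (Fin c) (Fin d) ℝ) :
    frobSq (Matrix.fromBlocks A B C D) = frobSq A + frobSq B + frobSq C + frobSq D := by
  simp only [frobSq, Fintype.sum_sum_type, Matrix.fromBlocks_apply₁₁, Matrix.fromBlocks_apply₁₂,
    Matrix.fromBlocks_apply₂₁, Matrix.fromBlocks_apply₂₂, Finset.sum_add_distrib]
  ring

lemma frobSq_one (a : ℕ) : frobSq (1 : Matrix (Fin a) (Fin a) ℝ) = a := by
  simp [frobSq, Matrix.one_apply, apply_ite (fun t : ℝ => t ^ 2)]

lemma frobSq_zero {a b : ℕ} : frobSq (0 : Matrix (Fin a) (Fin b) ℝ) = 0 := by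
  simp [frobSq]

lemma frobSq_neg {a b : ℕ} (A : Matrix (Fin a) (Fin b) ℝ) : frobSq (-A) = frobSq A := by
  simp [frobSq]

lemma inv_formula {m n : ℕ} (M₁ : Matrix (Fin n) (Fin m) ℝ) (M₂ : Matrix (Fin n) (Fin n) ℝ)
    (hM₂ : IsUnit M₂) :
    (Matrix.fromBlocks (1 : Matrix (Fin m) (Fin m) ℝ) 0 M₁ M₂)⁻¹ =
      Matrix.fromBlocks 1 0 (-(M₂⁻¹ * M₁)) M₂⁻¹ := by
  haveI := hM₂.invertible
  haveI : Invertible (1 : Matrix (Fin m) (Fin m) ℝ) := invertibleOne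
  haveI := Matrix.fromBlocksZero₁₂Invertible (1 : Matrix (Fin m) (Fin m) ℝ) M₁ M₂
  rw [← Matrix.invOf_eq_nonsing_inv, Matrix.invOf_fromBlocks_zero₁₂_eq]
  simp [Matrix.invOf_eq_nonsing_inv]

set_option maxHeartbeats 1000000 in
/-- For `M = [[I, 0], [M₁, M₂]]` with `‖M₁‖ ≤ K` and `M₂` invertible:
`‖M⁻¹‖ ≤ (m + (1 + mK²)‖M₂⁻¹‖_F²)^{1/2} ≤ (m + (1 + mK²) n ‖M₂⁻¹‖²)^{1/2}`. -/
theorem blockTriangular_inv_opNorm_bound {m n : ℕ} (K : ℝ) (hK : 0 ≤ K)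
    (M₁ : Matrix (Fin n) (Fin m) ℝ) (M₂ : Matrix (Fin n) (Fin n) ℝ)
    (hM₁ : matOpNorm M₁ ≤ K) (hM₂ : IsUnit M₂) :
    matOpNorm (Matrix.fromBlocks (1 : Matrix (Fin m) (Fin m) ℝ) 0 M₁ M₂)⁻¹ ≤
      Real.sqrt (m + (1 + m * K ^ 2) * matFrobNorm M₂⁻¹ ^ 2) ∧
    Real.sqrt (m + (1 + m * K ^ 2) * matFrobNorm M₂⁻¹ ^ 2) ≤
      Real.sqrt (m + (1 + m * K ^ 2) * n * matOpNorm M₂⁻¹ ^ 2) := by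
  constructor
  · rw [inv_formula M₁ M₂ hM₂]
    refine le_trans (matOpNorm_le_matFrobNorm _) ?_
    rw [matFrobNorm_eq]
    apply Real.sqrt_le_sqrt
    rw [frobSq_fromBlocks, frobSq_one, frobSq_zero, frobSq_neg, matFrobNorm_sq]
    have h1 : frobSq (M₂⁻¹ * M₁) ≤ matOpNorm M₂⁻¹ ^ 2 * frobSq M₁ := frobSq_mul_le _ _
    have h2 : frobSq M₁ ≤ m * K ^ 2 := by
      have hc := frobSq_le_card_mul M₁
      rw [Fintype.card_fin] at hc
      refine le_trans hc ?_
      have := pow_le_pow_left₀ (matOpNorm_nonneg M₁) hM₁ 2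
      nlinarith [Nat.cast_nonneg (α := ℝ) m]
    have h3 : matOpNorm M₂⁻¹ ^ 2 ≤ frobSq M₂⁻¹ := by
      rw [← matFrobNorm_sq]
      exact pow_le_pow_left₀ (matOpNorm_nonneg _) (matOpNorm_le_matFrobNorm _) 2
    have h4 : 0 ≤ frobSq M₂⁻¹ := frobSq_nonneg _
    have h5 : 0 ≤ matOpNorm M₂⁻¹ ^ 2 := sq_nonneg _
    have h6 : 0 ≤ frobSq M₁ := frobSq_nonneg _
    nlinarith
  · apply Real.sqrt_le_sqrt
    have h1 : matFrobNorm M₂⁻¹ ^ 2 = frobSq M₂⁻¹ := matFrobNorm_sq _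
    have h2 : frobSq M₂⁻¹ ≤ n * matOpNorm M₂⁻¹ ^ 2 := by
      have hc := frobSq_le_card_mul M₂⁻¹
      rwa [Fintype.card_fin] at hc
    have h3 : (0:ℝ) ≤ 1 + m * K ^ 2 := by positivity
    nlinarith
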